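/- Fix 1 ≤ i ≤ s. Let f_{i−1} ∈ ℂ[x,y] be a nonzero polynomial with ϑ_{ι_i}(f_{i−1}) = γ_i^{(i)}. Let a, b ∈ ℂ[[x,y]] be nonzero with ϑ_{ι_i}(a) and ϑ_{ι_i}(b) finite and belonging to Γ_{i−1}(λ_1, …, λ_i), and let α, β ∈ ℕ_0. If ϑ_{ι_i}(a·f_{i−1}^α) = ϑ_{ι_i}(b·f_{i−1}^β), then α − β is an integer multiple of k_i. -/

import Mathlib

noncomputable def psOrdQ (f : PowerSeries ℂ) : WithTop ℚ :=
  WithTop.map (fun m : ℕ => (m : ℚ)) f.order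

/-- Substitution x ↦ t^e on power series (for e ≥ 1). -/
noncomputable def expandPS (e : ℕ) (f : PowerSeries ℂ) : PowerSeries ℂ :=
  PowerSeries.mk fun n => if e ∣ n then PowerSeries.coeff (n / e) f else 0

/-- Truncated parametrization pullback on ℂ[[x]][y]: x ↦ t^e, y ↦ yi. -/
noncomputable def iotaPS (e : ℕ) (yi : PowerSeries ℂ) (g : Polynomial (PowerSeries ℂ)) :
    PowerSeries ℂ :=
  ∑ ℓ ∈ g.support, expandPS e (g.coeff ℓ) * yi ^ ℓ

/-- Parametrization pullback on ℂ[[x,y]]: x ↦ t^k, y ↦ Y (for k ≥ 1 and Y of positive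
order; the coefficient of t^m only receives contributions from monomials x^a y^b with
a, b ≤ m). -/
noncomputable def iotaMv (k : ℕ) (Y : PowerSeries ℂ) (G : MvPowerSeries (Fin 2) ℂ) :
    PowerSeries ℂ :=
  PowerSeries.mk fun m =>
    ∑ p ∈ Finset.range (m + 1) ×ˢ Finset.range (m + 1),
      if k * p.1 ≤ m then
        MvPowerSeries.coeff (Finsupp.single (0 : Fin 2) p.1 + Finsupp.single (1 : Fin 2) p.2)
            G *
          PowerSeries.coeff (m - k * p.1) (Y ^ p.2)
      else 0

/-- The monomial substitution. -/
noncomputable def wps (k : ℕ) (Y : PowerSeries ℂ) (p : ℕ × ℕ) : PowerSeries ℂ :=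
  PowerSeries.X ^ (k * p.1) * Y ^ p.2

noncomputable def Dp (p : ℕ × ℕ) : Fin 2 →₀ ℕ :=
  Finsupp.single (0 : Fin 2) p.1 + Finsupp.single (1 : Fin 2) p.2

lemma Dp_apply0 (p : ℕ × ℕ) : Dp p 0 = p.1 := by simp [Dp]
lemma Dp_apply1 (p : ℕ × ℕ) : Dp p 1 = p.2 := by simp [Dp]

lemma Dp_add (p q : ℕ × ℕ) : Dp (p + q) = Dp p + Dp q := by
  simp [Dp, Finsupp.single_add]; abel

lemma eq_Dp (d : Fin 2 →₀ ℕ) : d = Dp (d 0, d 1) := by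
  ext x; fin_cases x <;> simp [Dp]

lemma coeff_wps_zero {k : ℕ} (hk : 1 ≤ k) {Y : PowerSeries ℂ}
    (hY : PowerSeries.constantCoeff Y = 0) {m : ℕ} {p : ℕ × ℕ}
    (h : m < k * p.1 ∨ m < p.2) :
    PowerSeries.coeff m (wps k Y p) = 0 := by
  have hdvd : (PowerSeries.X : PowerSeries ℂ) ^ (k * p.1 + p.2) ∣ wps k Y p := by
    rw [pow_add]
    exact mul_dvd_mul dvd_rfl (pow_dvd_pow_of_dvd (PowerSeries.X_dvd_iff.mpr hY) _)
  refine PowerSeries.X_pow_dvd_iff.mp hdvd m ?_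
  rcases h with h | h
  · exact lt_of_lt_of_le h (Nat.le_add_right _ _)
  · exact lt_of_lt_of_le h (Nat.le_add_left _ _)

lemma coeff_iotaMv {k : ℕ} (hk : 1 ≤ k) {Y : PowerSeries ℂ}
    (hY : PowerSeries.constantCoeff Y = 0) (G : MvPowerSeries (Fin 2) ℂ) (m : ℕ)
    (T : Finset (ℕ × ℕ)) (hT : Finset.range (m + 1) ×ˢ Finset.range (m + 1) ⊆ T) :
    PowerSeries.coeff m (iotaMv k Y G) =
      ∑ p ∈ T, MvPowerSeries.coeff (Dp p) G * PowerSeries.coeff m (wps k Y p) := by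
  rw [iotaMv, PowerSeries.coeff_mk]
  rw [Finset.sum_subset hT]
  · apply Finset.sum_congr rfl
    intro p hp
    by_cases h : k * p.1 ≤ m
    · rw [if_pos h]
      congr 1
      rw [wps]
      conv_rhs => rw [show m = (m - k * p.1) + k * p.1 from (Nat.sub_add_cancel h).symm]
      rw [PowerSeries.coeff_X_pow_mul]
    · rw [if_neg h, coeff_wps_zero hk hY (Or.inl (Nat.lt_of_not_le h))]
      ring
  · intro p hp hps
    have hle : p.1 ≤ k * p.1 := Nat.le_mul_of_pos_left _ hk
    have hcond : ¬ (k * p.1 ≤ m) ∨ m < p.2 := by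
      simp only [Finset.mem_product, Finset.mem_range, not_and_or, not_lt] at hps
      omega
    rcases hcond with h | h
    · rw [if_neg h]
    · by_cases h' : k * p.1 ≤ m
      · rw [if_pos h']
        have : PowerSeries.coeff (m - k * p.1) (Y ^ p.2) = 0 := by
          refine PowerSeries.X_pow_dvd_iff.mp
            (pow_dvd_pow_of_dvd (PowerSeries.X_dvd_iff.mpr hY) p.2) _ (by omega)
        rw [this, mul_zero]
      · rw [if_neg h']


lemma iotaMv_mul {k : ℕ} (hk : 1 ≤ k) {Y : PowerSeries ℂ}
    (hY : PowerSeries.constantCoeff Y = 0) (G H : MvPowerSeries (Fin 2) ℂ) :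
    iotaMv k Y (G * H) = iotaMv k Y G * iotaMv k Y H := by
  ext m
  set S := Finset.range (m + 1) ×ˢ Finset.range (m + 1) with hS
  have hmemS : ∀ p : ℕ × ℕ, p ∈ S ↔ p.1 ≤ m ∧ p.2 ≤ m := by
    intro p; simp [hS, Nat.lt_succ_iff]
  have hcw0 : ∀ p : ℕ × ℕ, p ∉ S → PowerSeries.coeff m (wps k Y p) = 0 := by
    intro p hp
    have hle : p.1 ≤ k * p.1 := Nat.le_mul_of_pos_left _ hk
    rw [hmemS] at hp
    exact coeff_wps_zero hk hY (by omega)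
  set f : ℕ × ℕ → ℕ × ℕ → ℂ := fun q r =>
    MvPowerSeries.coeff (Dp q) G * MvPowerSeries.coeff (Dp r) H *
      PowerSeries.coeff m (wps k Y (q + r)) with hf
  have step1 : ∀ p ∈ S, MvPowerSeries.coeff (Dp p) (G * H) =
      ∑ z ∈ (S ×ˢ S).filter (fun z => z.1 + z.2 = p),
        MvPowerSeries.coeff (Dp z.1) G * MvPowerSeries.coeff (Dp z.2) H := by
    intro p hp
    rw [MvPowerSeries.coeff_mul]
    refine Finset.sum_nbij' (fun uv => ((uv.1 0, uv.1 1), (uv.2 0, uv.2 1)))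
      (fun z => (Dp z.1, Dp z.2)) ?_ ?_ ?_ ?_ ?_
    · intro uv huv
      rw [Finset.HasAntidiagonal.mem_antidiagonal] at huv
      have h0 : uv.1 0 + uv.2 0 = p.1 := by
        have := congrArg (fun d => d 0) huv; simpa [Dp_apply0] using this
      have h1 : uv.1 1 + uv.2 1 = p.2 := by
        have := congrArg (fun d => d 1) huv; simpa [Dp_apply1] using this
      rw [hmemS] at hp
      simp only [Finset.mem_filter, Finset.mem_product, hmemS]
      refine ⟨⟨⟨by omega, by omega⟩, by omega, by omega⟩, ?_⟩
      refine Prod.ext ?_ ?_ <;> simp <;> omega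
    · intro z hz
      rw [Finset.HasAntidiagonal.mem_antidiagonal]
      rw [Finset.mem_filter] at hz
      rw [← Dp_add, hz.2]
    · intro uv huv
      exact Prod.ext (eq_Dp uv.1).symm (eq_Dp uv.2).symm
    · intro z hz
      simp [Dp_apply0, Dp_apply1]
    · intro uv huv
      have e1 := (eq_Dp uv.1).symm
      have e2 := (eq_Dp uv.2).symm
      simp only []
      rw [show Dp (uv.1 0, uv.1 1) = uv.1 from e1, show Dp (uv.2 0, uv.2 1) = uv.2 from e2]
  have hfil : ∀ p ∈ S, ((S ×ˢ S).filter (fun z => z.1 + z.2 = p)) =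
      ((S ×ˢ S).filter (fun z => z.1 + z.2 ∈ S)).filter (fun z => z.1 + z.2 = p) := by
    intro p hp
    rw [Finset.filter_filter]
    exact (Finset.filter_congr (fun z hz => by
      constructor
      · intro h; exact ⟨h ▸ hp, h⟩
      · intro h; exact h.2))
  have lhs_eq : PowerSeries.coeff m (iotaMv k Y (G * H)) =
      ∑ z ∈ (S ×ˢ S).filter (fun z => z.1 + z.2 ∈ S), f z.1 z.2 := by
    rw [coeff_iotaMv hk hY _ m S (le_refl _)]
    rw [← Finset.sum_fiberwise_of_maps_to (g := fun z : (ℕ × ℕ) × (ℕ × ℕ) => z.1 + z.2)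
      (t := S) (fun z hz => (Finset.mem_filter.mp hz).2) (fun z => f z.1 z.2)]
    apply Finset.sum_congr rfl
    intro p hp
    rw [step1 p hp, Finset.sum_mul, hfil p hp]
    apply Finset.sum_congr rfl
    intro z hz
    have hzp : z.1 + z.2 = p := by
      have := (Finset.mem_filter.mp hz).2
      simpa using this
    rw [hf]
    simp only []
    rw [hzp]
  have lhs_eq2 : PowerSeries.coeff m (iotaMv k Y (G * H)) =
      ∑ z ∈ S ×ˢ S, f z.1 z.2 := by
    rw [lhs_eq]
    apply Finset.sum_subset (Finset.filter_subset _ _)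
    intro z hz hnz
    have : z.1 + z.2 ∉ S := by
      intro hmem
      exact hnz (Finset.mem_filter.mpr ⟨hz, hmem⟩)
    rw [hf]
    simp only []
    rw [hcw0 _ this, mul_zero]
  -- RHS
  have rhs_eq : PowerSeries.coeff m (iotaMv k Y G * iotaMv k Y H) =
      ∑ z ∈ S ×ˢ S, f z.1 z.2 := by
    rw [PowerSeries.coeff_mul]
    have expand : ∀ uv : ℕ × ℕ, uv ∈ Finset.HasAntidiagonal.antidiagonal m →
        (PowerSeries.coeff uv.1 (iotaMv k Y G)) * (PowerSeries.coeff uv.2 (iotaMv k Y H)) =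
        ∑ z ∈ S ×ˢ S, (MvPowerSeries.coeff (Dp z.1) G * PowerSeries.coeff uv.1 (wps k Y z.1)) *
          (MvPowerSeries.coeff (Dp z.2) H * PowerSeries.coeff uv.2 (wps k Y z.2)) := by
      intro uv huv
      rw [Finset.HasAntidiagonal.mem_antidiagonal] at huv
      have h1 : Finset.range (uv.1 + 1) ×ˢ Finset.range (uv.1 + 1) ⊆ S := by
        apply Finset.product_subset_product <;>
          exact Finset.range_subset_range.mpr (by omega)
      have h2 : Finset.range (uv.2 + 1) ×ˢ Finset.range (uv.2 + 1) ⊆ S := by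
        apply Finset.product_subset_product <;>
          exact Finset.range_subset_range.mpr (by omega)
      rw [coeff_iotaMv hk hY G uv.1 S h1, coeff_iotaMv hk hY H uv.2 S h2,
        Finset.sum_mul_sum]
      rw [← Finset.sum_product']
    rw [Finset.sum_congr rfl expand, Finset.sum_comm]
    apply Finset.sum_congr rfl
    intro z hz
    have : ∀ uv : ℕ × ℕ,
        (MvPowerSeries.coeff (Dp z.1) G * PowerSeries.coeff uv.1 (wps k Y z.1)) *
          (MvPowerSeries.coeff (Dp z.2) H * PowerSeries.coeff uv.2 (wps k Y z.2)) =
        MvPowerSeries.coeff (Dp z.1) G * MvPowerSeries.coeff (Dp z.2) H *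
          (PowerSeries.coeff uv.1 (wps k Y z.1) * PowerSeries.coeff uv.2 (wps k Y z.2)) :=
      fun uv => by ring
    rw [Finset.sum_congr rfl (fun uv _ => this uv), ← Finset.mul_sum]
    rw [hf]
    simp only []
    congr 1
    rw [← PowerSeries.coeff_mul]
    congr 1
    rw [wps, wps, wps]
    rw [show (z.1 + z.2).1 = z.1.1 + z.2.1 from rfl, show (z.1 + z.2).2 = z.1.2 + z.2.2 from rfl,
      Nat.mul_add, pow_add, pow_add]
    ring
  rw [lhs_eq2, rhs_eq]

lemma order_iotaMv_mul_pow {k : ℕ} (hk : 1 ≤ k) {Y : PowerSeries ℂ}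
    (hY : PowerSeries.constantCoeff Y = 0) (a F : MvPowerSeries (Fin 2) ℂ) (n : ℕ) :
    (iotaMv k Y (a * F ^ n)).order =
      (iotaMv k Y a).order + n • (iotaMv k Y F).order := by
  induction n with
  | zero => simp
  | succ n ih =>
    rw [pow_succ, ← mul_assoc, iotaMv_mul hk hY, PowerSeries.order_mul, ih, succ_nsmul,
      add_assoc]

lemma psOrdQ_getOrd (g : PowerSeries ℂ) (q : ℚ) (h : psOrdQ g = (q : WithTop ℚ)) :
    ∃ n : ℕ, g.order = (n : ℕ∞) ∧ (n : ℚ) = q := by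
  rw [psOrdQ] at h
  cases ho : g.order with
  | top => rw [ho] at h; exact absurd h WithTop.top_ne_coe
  | coe n =>
    rw [ho] at h
    exact ⟨n, rfl, WithTop.coe_injective h⟩

theorem stmt_19
    (s : ℕ) (hs : 1 ≤ s)
    (lam : ℕ → ℚ) (hlam1 : 1 < lam 1)
    (hlam_mono : ∀ i, 1 ≤ i → i < s → lam i < lam (i + 1))
    (M : ℕ → AddSubgroup ℚ)
    (hM : ∀ i, M i = AddSubgroup.closure ({1} ∪ lam '' Set.Icc 1 i))
    (hlamM : ∀ i, 1 ≤ i → i ≤ s → lam i ∉ M (i - 1))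
    (kk : ℕ → ℕ)
    (hkk : ∀ i, 1 ≤ i → i ≤ s →
      IsLeast {m : ℕ | 0 < m ∧ (m : ℚ) * lam i ∈ M (i - 1)} (kk i))
    (e : ℕ → ℕ) (he0 : e 0 = 1)
    (he : ∀ i, 1 ≤ i → i ≤ s → e i = kk i * e (i - 1))
    (gam : ℕ → ℕ → ℚ)
    (hgam1 : ∀ j, 1 ≤ j → j ≤ s → gam j 1 = (e j : ℚ) * lam 1)
    (hgam : ∀ j, 1 ≤ j → j ≤ s → ∀ ℓ, 1 ≤ ℓ → ℓ ≤ j - 1 →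
      gam j (ℓ + 1) = (kk ℓ : ℚ) * gam j ℓ - (e j : ℚ) * lam ℓ + (e j : ℚ) * lam (ℓ + 1))
    (c : ℕ → ℂ) (hc : ∀ ℓ, 1 ≤ ℓ → ℓ ≤ s → c ℓ ≠ 0)
    (φ : ℕ → Polynomial ℂ)
    (hφ0 : ∀ ℓ, 1 ≤ ℓ → ℓ ≤ s → (φ ℓ).coeff 0 = 0)
    (hφsupp : ∀ ℓ, 1 ≤ ℓ → ℓ ≤ s → ∀ a ∈ (φ ℓ).support,
      ∃ m ∈ M ℓ, (a : ℚ) = (e s : ℚ) * m)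
    (hφord : ∀ ℓ, 1 ≤ ℓ → ℓ ≤ s → ∀ a ∈ (φ ℓ).support, (e s : ℚ) * lam ℓ < (a : ℚ))
    (hφdeg : ∀ ℓ, 1 ≤ ℓ → ℓ < s → ∀ a ∈ (φ ℓ).support, (a : ℚ) < (e s : ℚ) * lam (ℓ + 1))
    (E : ℕ → ℕ → ℕ)
    (hE : ∀ i, 1 ≤ i → i ≤ s → ∀ ℓ, 1 ≤ ℓ → ℓ ≤ i → (E i ℓ : ℚ) = (e i : ℚ) * lam ℓ)
    (φs : ℕ → ℕ → Polynomial ℂ)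
    (hφs : ∀ i, 1 ≤ i → i ≤ s → ∀ ℓ, 1 ≤ ℓ → ℓ ≤ i →
      (φs i ℓ).comp (Polynomial.X ^ (e s / e i)) = φ ℓ)
    (Y : ℕ → Polynomial ℂ)
    (hY : ∀ i, 1 ≤ i → i ≤ s →
      Y i = ∑ ℓ ∈ Finset.Icc 1 i, (Polynomial.C (c ℓ) * Polynomial.X ^ E i ℓ + φs i ℓ)) :
    ∀ i, 1 ≤ i → i ≤ s →
      ∀ F : MvPowerSeries (Fin 2) ℂ,
        {d : Fin 2 →₀ ℕ | MvPowerSeries.coeff d F ≠ 0}.Finite → F ≠ 0 →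
        psOrdQ (iotaMv (e i) ((Y i : Polynomial ℂ) : PowerSeries ℂ) F) =
          ((gam i i : ℚ) : WithTop ℚ) →
        ∀ a b : MvPowerSeries (Fin 2) ℂ, a ≠ 0 → b ≠ 0 →
        ∀ qa qb : ℚ,
          psOrdQ (iotaMv (e i) ((Y i : Polynomial ℂ) : PowerSeries ℂ) a) = (qa : WithTop ℚ) →
          psOrdQ (iotaMv (e i) ((Y i : Polynomial ℂ) : PowerSeries ℂ) b) = (qb : WithTop ℚ) →
          qa ∈ AddSubmonoid.closure ({(e i : ℚ)} ∪ gam i '' Set.Icc 1 (i - 1)) →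
          qb ∈ AddSubmonoid.closure ({(e i : ℚ)} ∪ gam i '' Set.Icc 1 (i - 1)) →
          ∀ α β : ℕ,
            PowerSeries.order
                (iotaMv (e i) ((Y i : Polynomial ℂ) : PowerSeries ℂ) (a * F ^ α)) =
              PowerSeries.order
                (iotaMv (e i) ((Y i : Polynomial ℂ) : PowerSeries ℂ) (b * F ^ β)) →
            ∃ m : ℤ, (α : ℤ) - (β : ℤ) = m * (kk i : ℤ) := by
  intro i hi1 his F hFfin hFne hFord a b ha hb qa qb hqa hqb hqaG hqbG α β hord
  clear hFfin hFne ha hb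
  -- basic positivity facts
  have hlam_pos : ∀ ℓ, 1 ≤ ℓ → ℓ ≤ s → 1 < lam ℓ := by
    intro ℓ h1
    induction ℓ, h1 using Nat.le_induction with
    | base => intro _; exact hlam1
    | succ n hn ih => intro hns; exact lt_trans (ih (by omega)) (hlam_mono n hn (by omega))
  have hkkpos : ∀ j, 1 ≤ j → j ≤ s → 0 < kk j := fun j h1 h2 => (hkk j h1 h2).1.1
  have hepos : ∀ j, j ≤ s → 0 < e j := by
    intro j
    induction j with
    | zero => intro _; omega
    | succ n ih =>
      intro h
      rw [he (n + 1) (by omega) h]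
      simp only [Nat.add_sub_cancel]
      exact Nat.mul_pos (hkkpos _ (by omega) h) (ih (by omega))
  have hedvd : ∀ j, i ≤ j → j ≤ s → e i ∣ e j := by
    intro j hij
    induction j, hij using Nat.le_induction with
    | base => intro _; exact dvd_rfl
    | succ n hn ih =>
      intro h
      rw [he (n + 1) (by omega) h]
      simp only [Nat.add_sub_cancel]
      exact Dvd.dvd.mul_left (ih (by omega)) _
  -- M facts
  have hMmono : ∀ j j' : ℕ, j ≤ j' → M j ≤ M j' := by
    intro j j' hjj'
    rw [hM, hM]
    exact AddSubgroup.closure_mono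
      (Set.union_subset_union subset_rfl (Set.image_mono (Set.Icc_subset_Icc le_rfl (by exact_mod_cast hjj'))))
  have h1M : ∀ j, (1 : ℚ) ∈ M j := fun j => by
    rw [hM]; exact AddSubgroup.subset_closure (Or.inl rfl)
  have hlamMem : ∀ ℓ j, 1 ≤ ℓ → ℓ ≤ j → lam ℓ ∈ M j := fun ℓ j h1 h2 => by
    rw [hM]; exact AddSubgroup.subset_closure (Or.inr ⟨ℓ, ⟨h1, h2⟩, rfl⟩)
  have heQ : ((e i : ℚ)) ≠ 0 := Nat.cast_ne_zero.mpr (hepos i his).ne'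
  -- gamma divided by e i lies in M (i-1)
  have gam_div : ∀ ℓ, 1 ≤ ℓ → ℓ ≤ i - 1 → (e i : ℚ)⁻¹ * gam i ℓ ∈ M (i - 1) := by
    intro ℓ h1
    induction ℓ, h1 using Nat.le_induction with
    | base =>
      intro h
      rw [hgam1 i hi1 his]
      have hid : (e i : ℚ)⁻¹ * ((e i : ℚ) * lam 1) = lam 1 := by field_simp
      rw [hid]
      exact hlamMem 1 (i - 1) le_rfl h
    | succ n hn ih =>
      intro h
      rw [hgam i hi1 his n hn (by omega)]
      have key : (e i : ℚ)⁻¹ * ((kk n : ℚ) * gam i n - (e i : ℚ) * lam n + (e i : ℚ) * lam (n + 1)) =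
          (kk n : ℚ) * ((e i : ℚ)⁻¹ * gam i n) - lam n + lam (n + 1) := by
        field_simp
        try ring
      rw [key]
      refine add_mem (sub_mem ?_ (hlamMem n (i - 1) hn (by omega)))
        (hlamMem (n + 1) (i - 1) (by omega) h)
      simpa [nsmul_eq_mul] using nsmul_mem (ih (by omega)) (kk n)
  have hgamii : (e i : ℚ)⁻¹ * gam i i - lam i ∈ M (i - 1) := by
    rcases eq_or_lt_of_le hi1 with h1 | h2
    · have hi : i = 1 := h1.symm
      subst hi
      rw [hgam1 1 le_rfl his]
      have : (e 1 : ℚ)⁻¹ * ((e 1 : ℚ) * lam 1) - lam 1 = 0 := by field_simp; ring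
      rw [this]
      exact zero_mem _
    · have h2' : 1 ≤ i - 1 := by omega
      have hrec := hgam i hi1 his (i - 1) h2' le_rfl
      rw [show i - 1 + 1 = i by omega] at hrec
      rw [hrec]
      have key : (e i : ℚ)⁻¹ * ((kk (i - 1) : ℚ) * gam i (i - 1) - (e i : ℚ) * lam (i - 1) +
            (e i : ℚ) * lam i) - lam i =
          (kk (i - 1) : ℚ) * ((e i : ℚ)⁻¹ * gam i (i - 1)) - lam (i - 1) := by
        field_simp
        try ring
      rw [key]
      exact sub_mem
        (by simpa [nsmul_eq_mul] using nsmul_mem (gam_div (i - 1) h2' le_rfl) (kk (i - 1)))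
        (hlamMem (i - 1) (i - 1) h2' le_rfl)
  -- the value semigroup is contained in e i * M (i-1)
  have hG : ∀ q ∈ AddSubmonoid.closure ({(e i : ℚ)} ∪ gam i '' Set.Icc 1 (i - 1)),
      (e i : ℚ)⁻¹ * q ∈ M (i - 1) := by
    intro q hq
    induction hq using AddSubmonoid.closure_induction with
    | mem x hx =>
      rcases hx with hx | ⟨ℓ, hℓ, rfl⟩
      · rw [Set.mem_singleton_iff] at hx
        rw [hx, inv_mul_cancel₀ heQ]
        exact h1M _
      · exact gam_div ℓ hℓ.1 hℓ.2
    | zero => rw [mul_zero]; exact zero_mem _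
    | add x y hx hy ihx ihy => rw [mul_add]; exact add_mem ihx ihy
  -- Y i has zero constant term
  have hYe : PowerSeries.constantCoeff ((Y i : Polynomial ℂ) : PowerSeries ℂ) = 0 := by
    have hY0 : (Y i).coeff 0 = 0 := by
      rw [hY i hi1 his, Polynomial.finset_sum_coeff]
      refine Finset.sum_eq_zero ?_
      intro ℓ hℓ
      rw [Finset.mem_Icc] at hℓ
      have hℓs : ℓ ≤ s := le_trans hℓ.2 his
      have hEpos : 0 < E i ℓ := by
        have hcast : (E i ℓ : ℚ) = (e i : ℚ) * lam ℓ := hE i hi1 his ℓ hℓ.1 hℓ.2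
        have : (0 : ℚ) < (e i : ℚ) * lam ℓ := by
          have := hlam_pos ℓ hℓ.1 hℓs
          have he1 : (1 : ℚ) ≤ (e i : ℚ) := by exact_mod_cast hepos i his
          nlinarith
        have : (0 : ℚ) < (E i ℓ : ℚ) := hcast ▸ this
        exact_mod_cast this
      have hφs0 : (φs i ℓ).coeff 0 = 0 := by
        have hN : e s / e i ≠ 0 := by
          have hle : e i ≤ e s := Nat.le_of_dvd (hepos s le_rfl) (hedvd s his le_rfl)
          have := Nat.one_le_div_iff (hepos i his) |>.mpr hle
          omega
        have hcomp := hφs i hi1 his ℓ hℓ.1 hℓ.2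
        have := hφ0 ℓ hℓ.1 hℓs
        rw [← hcomp, Polynomial.coeff_zero_eq_eval_zero, Polynomial.eval_comp] at this
        rw [Polynomial.eval_pow, Polynomial.eval_X, zero_pow hN] at this
        rw [Polynomial.coeff_zero_eq_eval_zero]
        exact this
      have hne : ¬ (0 = E i ℓ) := by omega
      simp [Polynomial.coeff_X_pow, hne, hφs0]
    rw [← PowerSeries.coeff_zero_eq_constantCoeff, Polynomial.coeff_coe]
    exact hY0
  have hke : 1 ≤ e i := hepos i his
  -- extract natural orders
  obtain ⟨nF, hnF, hnFq⟩ := psOrdQ_getOrd _ _ hFord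
  obtain ⟨na, hna, hnaq⟩ := psOrdQ_getOrd _ _ hqa
  obtain ⟨nb, hnb, hnbq⟩ := psOrdQ_getOrd _ _ hqb
  rw [order_iotaMv_mul_pow hke hYe a F α, order_iotaMv_mul_pow hke hYe b F β,
    hna, hnb, hnF] at hord
  have hnat : na + α * nF = nb + β * nF := by
    have h2 : ((na + α * nF : ℕ) : ℕ∞) = ((nb + β * nF : ℕ) : ℕ∞) := by
      push_cast
      simpa [nsmul_eq_mul] using hord
    exact_mod_cast h2
  have hQeq : qa + (α : ℚ) * gam i i = qb + (β : ℚ) * gam i i := by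
    have h3 := congrArg (fun n : ℕ => (n : ℚ)) hnat
    push_cast at h3
    rw [hnaq, hnbq, hnFq] at h3
    exact h3
  set d : ℤ := (α : ℤ) - (β : ℤ) with hd
  have hdQ : (d : ℚ) = (α : ℚ) - (β : ℚ) := by push_cast [hd]; ring
  have hdlam : (d : ℚ) * lam i ∈ M (i - 1) := by
    have hqa' : (e i : ℚ)⁻¹ * qa ∈ M (i - 1) := hG qa hqaG
    have hqb' : (e i : ℚ)⁻¹ * qb ∈ M (i - 1) := hG qb hqbG
    have hdg : ((α : ℚ) - (β : ℚ)) * gam i i = qb - qa := by linarith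
    have h1 : (d : ℚ) * ((e i : ℚ)⁻¹ * gam i i) ∈ M (i - 1) := by
      have : (d : ℚ) * ((e i : ℚ)⁻¹ * gam i i) = (e i : ℚ)⁻¹ * qb - (e i : ℚ)⁻¹ * qa := by
        rw [hdQ, mul_left_comm, hdg]; ring
      rw [this]
      exact sub_mem hqb' hqa'
    have h2 : (d : ℚ) * ((e i : ℚ)⁻¹ * gam i i - lam i) ∈ M (i - 1) := by
      simpa [zsmul_eq_mul] using zsmul_mem hgamii d
    have h3 : (d : ℚ) * lam i =
        (d : ℚ) * ((e i : ℚ)⁻¹ * gam i i) - (d : ℚ) * ((e i : ℚ)⁻¹ * gam i i - lam i) := by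
      ring
    rw [h3]
    exact sub_mem h1 h2
  have hnatdvd : ∀ n : ℕ, (n : ℚ) * lam i ∈ M (i - 1) → kk i ∣ n := by
    intro n hn
    rcases Nat.eq_zero_or_pos (n % kk i) with hr | hr
    · exact Nat.dvd_of_mod_eq_zero hr
    · exfalso
      have hklam : ((kk i : ℕ) : ℚ) * lam i ∈ M (i - 1) := (hkk i hi1 his).1.2
      have hqmem : ((n / kk i : ℕ) : ℚ) * (((kk i : ℕ) : ℚ) * lam i) ∈ M (i - 1) := by
        simpa [nsmul_eq_mul] using nsmul_mem hklam (n / kk i)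
      have hrlam : ((n % kk i : ℕ) : ℚ) * lam i ∈ M (i - 1) := by
        have hmd := Nat.mod_add_div n (kk i)
        have hcast : ((n % kk i : ℕ) : ℚ) + ((kk i : ℕ) : ℚ) * ((n / kk i : ℕ) : ℚ) = (n : ℚ) := by
          exact_mod_cast hmd
        have hsplit : ((n % kk i : ℕ) : ℚ) * lam i =
            (n : ℚ) * lam i - ((n / kk i : ℕ) : ℚ) * (((kk i : ℕ) : ℚ) * lam i) := by
          have : ((n % kk i : ℕ) : ℚ) = (n : ℚ) - ((kk i : ℕ) : ℚ) * ((n / kk i : ℕ) : ℚ) := by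
            linarith
          rw [this]; ring
        rw [hsplit]
        exact sub_mem hn hqmem
      have hlb := (hkk i hi1 his).2 ⟨hr, hrlam⟩
      have := Nat.mod_lt n (hkkpos i hi1 his)
      omega
  have hdvd : (kk i : ℤ) ∣ d := by
    have habs : ((d.natAbs : ℕ) : ℚ) * lam i ∈ M (i - 1) := by
      have hcast : ((d.natAbs : ℕ) : ℚ) = |(d : ℚ)| := by
        rw [Nat.cast_natAbs]; push_cast; ring
      rcases abs_cases (d : ℚ) with ⟨h1, _⟩ | ⟨h1, _⟩
      · rw [hcast, h1]; exact hdlam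
      · rw [hcast, h1]; simpa [neg_mul] using neg_mem hdlam
    exact Int.dvd_natAbs.mp (Int.ofNat_dvd.mpr (hnatdvd d.natAbs habs))
  obtain ⟨m, hm⟩ := hdvd
  exact ⟨m, by rw [hm]; ring⟩
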